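/- Let S² be the unit sphere in ℝ³ and let r : S² → S² be the reflection r(x₁, x₂, x₃) = (x₁, −x₂, x₃). Let τ : S² × S² → S² × S² be the involution τ(x, y) = (r(x), r(y)). Then the orbit space (S² × S²)/⟨τ⟩, equipped with the quotient topology, is homeomorphic to the 4-sphere S⁴. -/

import Mathlib

noncomputable section

/-- The unit 2-sphere in `ℝ³`. -/
abbrev TwoSphere := Metric.sphere (0 : EuclideanSpace ℝ (Fin 3)) 1

/-- The reflection `r(x₁, x₂, x₃) = (x₁, −x₂, x₃)` of `ℝ³`. -/
def reflSecond (x : EuclideanSpace ℝ (Fin 3)) : EuclideanSpace ℝ (Fin 3) :=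
  WithLp.toLp 2 ![x 0, -(x 1), x 2]

lemma reflSecond_mem_sphere (x : TwoSphere) : reflSecond (x : EuclideanSpace ℝ (Fin 3)) ∈
    Metric.sphere (0 : EuclideanSpace ℝ (Fin 3)) 1 := by
  have hx := x.2
  simp only [Metric.mem_sphere, dist_zero_right] at hx ⊢
  rw [EuclideanSpace.norm_eq] at hx ⊢
  rw [← hx]
  congr 1
  rw [Fin.sum_univ_three, Fin.sum_univ_three]
  simp [reflSecond]

/-- The reflection `r` restricted to the 2-sphere. -/
def reflSphere (x : TwoSphere) : TwoSphere :=
  ⟨reflSecond (x : EuclideanSpace ℝ (Fin 3)), reflSecond_mem_sphere x⟩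

/-- The involution `τ(x, y) = (r(x), r(y))` of `S² × S²`. -/
def tau (p : TwoSphere × TwoSphere) : TwoSphere × TwoSphere :=
  (reflSphere p.1, reflSphere p.2)

-- sum of squares of sphere point
lemma sphere3_sum (x : TwoSphere) :
    (x : EuclideanSpace ℝ (Fin 3)) 0 ^ 2 + (x : EuclideanSpace ℝ (Fin 3)) 1 ^ 2
      + (x : EuclideanSpace ℝ (Fin 3)) 2 ^ 2 = 1 := by
  have hx := x.2
  simp only [Metric.mem_sphere, dist_zero_right, EuclideanSpace.norm_eq] at hx
  have h2 := congrArg (· ^ 2) hx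
  simp only [Real.sq_sqrt (Finset.sum_nonneg fun i _ => sq_nonneg _)] at h2
  rw [Fin.sum_univ_three] at h2
  simpa [Real.norm_eq_abs, sq_abs] using h2

lemma mem_sphere3 (a b c : ℝ) (h : a^2+b^2+c^2 = 1) :
    (WithLp.toLp 2 ![a,b,c] : EuclideanSpace ℝ (Fin 3)) ∈ Metric.sphere (0 : EuclideanSpace ℝ (Fin 3)) 1 := by
  rw [mem_sphere_zero_iff_norm (E := EuclideanSpace ℝ (Fin 3)), EuclideanSpace.norm_eq,
    Fin.sum_univ_three]
  simp only [PiLp.toLp_apply, WithLp.ofLp_toLp, Matrix.cons_val_zero, Matrix.cons_val_one, Matrix.head_cons,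
    Matrix.cons_val_two, Matrix.tail_cons, Real.norm_eq_abs, sq_abs]
  rw [h]; exact Real.sqrt_one

lemma sphere_ext {x y : TwoSphere}
    (h0 : (x : EuclideanSpace ℝ (Fin 3)) 0 = (y : EuclideanSpace ℝ (Fin 3)) 0)
    (h1 : (x : EuclideanSpace ℝ (Fin 3)) 1 = (y : EuclideanSpace ℝ (Fin 3)) 1)
    (h2 : (x : EuclideanSpace ℝ (Fin 3)) 2 = (y : EuclideanSpace ℝ (Fin 3)) 2) : x = y := by
  ext i
  fin_cases i <;> assumption

lemma reflSphere_coe (x : TwoSphere) (i : Fin 3) :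
    (reflSphere x : EuclideanSpace ℝ (Fin 3)) i =
      ![(x : EuclideanSpace ℝ (Fin 3)) 0, -((x : EuclideanSpace ℝ (Fin 3)) 1),
        (x : EuclideanSpace ℝ (Fin 3)) 2] i := rfl

def Fmap (p : TwoSphere × TwoSphere) : EuclideanSpace ℝ (Fin 5) :=
  WithLp.toLp 2 ![(p.1 : EuclideanSpace ℝ (Fin 3)) 0, (p.1 : EuclideanSpace ℝ (Fin 3)) 2,
    (p.2 : EuclideanSpace ℝ (Fin 3)) 0, (p.2 : EuclideanSpace ℝ (Fin 3)) 2,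
    (p.1 : EuclideanSpace ℝ (Fin 3)) 1 * (p.2 : EuclideanSpace ℝ (Fin 3)) 1]

lemma continuous_Fmap : Continuous Fmap := by
  have c1 : ∀ i : Fin 3, Continuous fun p : TwoSphere × TwoSphere =>
      (p.1 : EuclideanSpace ℝ (Fin 3)) i := fun i =>
    (EuclideanSpace.proj (𝕜 := ℝ) i).continuous.comp (continuous_subtype_val.comp continuous_fst)
  have c2 : ∀ i : Fin 3, Continuous fun p : TwoSphere × TwoSphere =>
      (p.2 : EuclideanSpace ℝ (Fin 3)) i := fun i =>
    (EuclideanSpace.proj (𝕜 := ℝ) i).continuous.comp (continuous_subtype_val.comp continuous_snd)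
  refine (show Continuous (WithLp.toLp 2 : (Fin 5 → ℝ) → EuclideanSpace ℝ (Fin 5)) by fun_prop).comp
    (f := fun p : TwoSphere × TwoSphere => (Fmap p).ofLp) ?_
  apply continuous_pi
  intro i
  fin_cases i <;> simp [Fmap]
  · exact c1 0
  · exact c1 2
  · exact c2 0
  · exact c2 2
  · exact (c1 1).mul (c2 1)

lemma Fmap_tau (p : TwoSphere × TwoSphere) : Fmap (tau p) = Fmap p := by
  ext i
  fin_cases i <;>
    simp [Fmap, tau, reflSphere_coe]

lemma norm_Fmap_sq (p : TwoSphere × TwoSphere) :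
    ‖Fmap p‖ ^ 2 = 1 + (1 - (p.1 : EuclideanSpace ℝ (Fin 3)) 1 ^ 2)
      * (1 - (p.2 : EuclideanSpace ℝ (Fin 3)) 1 ^ 2) := by
  rw [EuclideanSpace.norm_eq, Real.sq_sqrt (Finset.sum_nonneg fun i _ => sq_nonneg _),
    Fin.sum_univ_five]
  have h1 := sphere3_sum p.1
  have h2 := sphere3_sum p.2
  simp only [Fmap, PiLp.toLp_apply, WithLp.ofLp_toLp, Matrix.cons_val_zero, Matrix.cons_val_one, Matrix.head_cons,
    Matrix.cons_val_two, Matrix.tail_cons, Matrix.cons_val_three, Matrix.cons_val_four,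
    Real.norm_eq_abs, sq_abs]
  nlinarith [h1, h2]

lemma one_le_norm_Fmap (p : TwoSphere × TwoSphere) : 1 ≤ ‖Fmap p‖ := by
  have h := norm_Fmap_sq p
  have h1 : (p.1 : EuclideanSpace ℝ (Fin 3)) 1 ^ 2 ≤ 1 := by nlinarith [sphere3_sum p.1, sq_nonneg ((p.1 : EuclideanSpace ℝ (Fin 3)) 0), sq_nonneg ((p.1 : EuclideanSpace ℝ (Fin 3)) 2)]
  have h2 : (p.2 : EuclideanSpace ℝ (Fin 3)) 1 ^ 2 ≤ 1 := by nlinarith [sphere3_sum p.2, sq_nonneg ((p.2 : EuclideanSpace ℝ (Fin 3)) 0), sq_nonneg ((p.2 : EuclideanSpace ℝ (Fin 3)) 2)]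
  nlinarith [norm_nonneg (Fmap p)]


lemma lemA (s t : ℝ) (hs : 0 ≤ s) (ht : 0 ≤ t) (hst : s + t ≤ 1) :
    ∃ m : ℝ, 0 < m ∧ s*t*m^2 - m + 1 = 0 ∧ m*s ≤ 1 ∧ m*t ≤ 1 := by
  have hd0 : 0 ≤ 1 - 4*s*t := by
    nlinarith [sq_nonneg (s-t), sq_nonneg (s+t), mul_nonneg (mul_nonneg hs ht) (add_nonneg hs ht)]
  set d := Real.sqrt (1 - 4*s*t) with hd
  have hdnn : 0 ≤ d := Real.sqrt_nonneg _
  have hd2 : d^2 = 1 - 4*s*t := Real.sq_sqrt hd0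
  have hpos : 0 < 1 + d := by linarith
  refine ⟨2/(1+d), by positivity, ?_, ?_, ?_⟩
  · field_simp
    ring_nf
    nlinarith [hd2]
  · rw [div_mul_eq_mul_div, div_le_one hpos]
    rcases le_or_gt (2*s) 1 with h | h
    · linarith
    · have : 2*s - 1 ≤ d := by
        rw [hd, show (2*s-1 : ℝ) = Real.sqrt ((2*s-1)^2) from (Real.sqrt_sq (by linarith)).symm]
        apply Real.sqrt_le_sqrt; nlinarith
      linarith
  · rw [div_mul_eq_mul_div, div_le_one hpos]
    rcases le_or_gt (2*t) 1 with h | h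
    · linarith
    · have : 2*t - 1 ≤ d := by
        rw [hd, show (2*t-1 : ℝ) = Real.sqrt ((2*t-1)^2) from (Real.sqrt_sq (by linarith)).symm]
        apply Real.sqrt_le_sqrt; nlinarith
      linarith

lemma lemB (s t u m : ℝ) (hs0 : 0 ≤ s) (ht0 : 0 ≤ t) (hs1 : s ≤ 1) (ht1 : t ≤ 1)
    (hu : u^2 = (1-s)*(1-t)) (hm : 0 < m)
    (h1 : m*u^2 = (1-m*s)*(1-m*t)) (h2 : m*s ≤ 1) (h3 : m*t ≤ 1) : m = 1 := by
  have key : (m - 1) * (s*t*(m+1) - (s + t + u^2)) = 0 := by nlinarith [h1, hu]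
  rcases mul_eq_zero.1 key with h | h
  · linarith [sub_eq_zero.1 h]
  · have hvieta : s*t*m = 1 := by nlinarith [h1, h]
    have hstpos : 0 < s*t := by nlinarith
    have hspos : 0 < s := by
      rcases hs0.lt_or_eq with h' | h'
      · exact h'
      · exfalso; rw [← h'] at hstpos; simp at hstpos
    have htpos : 0 < t := by nlinarith
    have ht1' : t = 1 := by nlinarith
    have hs1' : s = 1 := by nlinarith
    rw [ht1', hs1'] at hvieta; linarith

/-- Pure-real core of injectivity. -/
lemma scale_eq_one (x0 x1 x2 z0 z1 z2 a0 a1 a2 b0 b1 b2 l : ℝ)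
    (hl : 0 < l)
    (hx : x0^2+x1^2+x2^2=1) (hz : z0^2+z1^2+z2^2=1)
    (ha : a0^2+a1^2+a2^2=1) (hb : b0^2+b1^2+b2^2=1)
    (e0 : a0 = l*x0) (e1 : a2 = l*x2) (e2 : b0 = l*z0) (e3 : b2 = l*z2)
    (e4 : a1*b1 = l*(x1*z1)) : l = 1 := by
  have hx1 : x1^2 = 1 - (x0^2+x2^2) := by linarith
  have hz1 : z1^2 = 1 - (z0^2+z2^2) := by linarith
  have f0 : a0^2 = l^2*x0^2 := by rw [e0]; ring
  have f1 : a2^2 = l^2*x2^2 := by rw [e1]; ring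
  have g0 : b0^2 = l^2*z0^2 := by rw [e2]; ring
  have g1 : b2^2 = l^2*z2^2 := by rw [e3]; ring
  have ha1 : a1^2 = 1 - l^2*(x0^2+x2^2) := by linarith [ha, f0, f1]
  have hb1 : b1^2 = 1 - l^2*(z0^2+z2^2) := by linarith [hb, g0, g1]
  have hA : (0:ℝ) ≤ x0^2+x2^2 := by positivity
  have hB : (0:ℝ) ≤ z0^2+z2^2 := by positivity
  have hC : x0^2+x2^2 ≤ 1 := by linarith [sq_nonneg x1, hx]
  have hD : z0^2+z2^2 ≤ 1 := by linarith [sq_nonneg z1, hz]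
  have hE : (x1*z1)^2 = (1-(x0^2+x2^2))*(1-(z0^2+z2^2)) := by rw [mul_pow, hx1, hz1]
  have hF : (0:ℝ) < l^2 := by positivity
  have hG : l^2*(x1*z1)^2 = (1-l^2*(x0^2+x2^2))*(1-l^2*(z0^2+z2^2)) := by
    have h' : l^2*(x1*z1)^2 = (a1*b1)^2 := by rw [e4]; ring
    rw [h', show (a1*b1)^2 = a1^2*b1^2 from by ring, ha1, hb1]
  have hH : l^2*(x0^2+x2^2) ≤ 1 := by linarith [ha1, sq_nonneg a1]
  have hI : l^2*(z0^2+z2^2) ≤ 1 := by linarith [hb1, sq_nonneg b1]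
  have hm := lemB (x0^2+x2^2) (z0^2+z2^2) (x1*z1) (l^2) hA hB hC hD hE hF hG hH hI
  have hfac : (l-1)*(l+1) = 0 := by linear_combination hm
  rcases mul_eq_zero.1 hfac with h | h
  · linarith
  · linarith

/-- Pure-real core of the case analysis. -/
lemma sign_cases (x1 z1 a1 b1 : ℝ) (hx : a1^2 = x1^2) (hz : b1^2 = z1^2)
    (hp : a1*b1 = x1*z1) : (a1 = x1 ∧ b1 = z1) ∨ (a1 = -x1 ∧ b1 = -z1) := by
  have hax : a1 = x1 ∨ a1 = -x1 := sq_eq_sq_iff_eq_or_eq_neg.mp hx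
  have hbz : b1 = z1 ∨ b1 = -z1 := sq_eq_sq_iff_eq_or_eq_neg.mp hz
  rcases hax with h1 | h1 <;> rcases hbz with h2 | h2
  · exact Or.inl ⟨h1, h2⟩
  · have h0 : x1 * z1 = 0 := by rw [h1, h2] at hp; linear_combination (-1/2)*hp
    rcases mul_eq_zero.1 h0 with h | h
    · exact Or.inr ⟨by rw [h1, h]; ring, h2⟩
    · exact Or.inl ⟨h1, by rw [h2, h]; ring⟩
  · have h0 : x1 * z1 = 0 := by rw [h1, h2] at hp; linear_combination (-1/2)*hp
    rcases mul_eq_zero.1 h0 with h | h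
    · exact Or.inl ⟨by rw [h1, h]; ring, h2⟩
    · exact Or.inr ⟨h1, by rw [h2, h]; ring⟩
  · exact Or.inr ⟨h1, h2⟩

def Hs (p : TwoSphere × TwoSphere) : Metric.sphere (0 : EuclideanSpace ℝ (Fin 5)) 1 :=
  ⟨‖Fmap p‖⁻¹ • Fmap p, by
    rw [mem_sphere_zero_iff_norm (E := EuclideanSpace ℝ (Fin 5))]
    have h1 : (1:ℝ) ≤ ‖Fmap p‖ := one_le_norm_Fmap p
    rw [norm_smul, norm_inv, norm_norm, inv_mul_cancel₀ (by linarith)]⟩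

lemma continuous_Hs : Continuous Hs := by
  apply Continuous.subtype_mk
  have hne : ∀ p, ‖Fmap p‖ ≠ 0 := fun p => by have := one_le_norm_Fmap p; linarith
  exact (continuous_Fmap.norm.inv₀ hne).smul continuous_Fmap

lemma Hs_tau (p : TwoSphere × TwoSphere) : Hs (tau p) = Hs p := by
  apply Subtype.ext
  show ‖Fmap (tau p)‖⁻¹ • Fmap (tau p) = ‖Fmap p‖⁻¹ • Fmap p
  rw [Fmap_tau]

lemma sphere5_sum (v : Metric.sphere (0 : EuclideanSpace ℝ (Fin 5)) 1) :
    (v : EuclideanSpace ℝ (Fin 5)) 0 ^ 2 + (v : EuclideanSpace ℝ (Fin 5)) 1 ^ 2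
      + (v : EuclideanSpace ℝ (Fin 5)) 2 ^ 2 + (v : EuclideanSpace ℝ (Fin 5)) 3 ^ 2
      + (v : EuclideanSpace ℝ (Fin 5)) 4 ^ 2 = 1 := by
  have hv := v.2
  simp only [Metric.mem_sphere, dist_zero_right, EuclideanSpace.norm_eq] at hv
  have h2 := congrArg (· ^ 2) hv
  simp only [Real.sq_sqrt (Finset.sum_nonneg fun i _ => sq_nonneg _)] at h2
  rw [Fin.sum_univ_five] at h2
  simpa [Real.norm_eq_abs, sq_abs] using h2

lemma Hs_injective {p q : TwoSphere × TwoSphere} (h : Hs p = Hs q) :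
    q = p ∨ q = tau p := by
  have hnp : (1:ℝ) ≤ ‖Fmap p‖ := one_le_norm_Fmap p
  have hnq : (1:ℝ) ≤ ‖Fmap q‖ := one_le_norm_Fmap q
  have hval : ‖Fmap p‖⁻¹ • Fmap p = ‖Fmap q‖⁻¹ • Fmap q := congrArg Subtype.val h
  set l : ℝ := ‖Fmap q‖ * ‖Fmap p‖⁻¹ with hldef
  have hl : 0 < l := by positivity
  have hF : Fmap q = l • Fmap p := by
    have := congrArg (fun w : EuclideanSpace ℝ (Fin 5) => ‖Fmap q‖ • w) hval
    simp only [smul_smul] at this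
    rw [mul_inv_cancel₀ (by linarith), one_smul] at this
    exact this.symm
  have hc : ∀ i, Fmap q i = l * Fmap p i := fun i => by rw [hF]; rfl
  have e0 := hc 0
  have e1 := hc 1
  have e2 := hc 2
  have e3 := hc 3
  have e4 := hc 4
  simp only [Fmap, PiLp.toLp_apply, WithLp.ofLp_toLp, Matrix.cons_val_zero, Matrix.cons_val_one, Matrix.head_cons,
    Matrix.cons_val_two, Matrix.tail_cons, Matrix.cons_val_three,
    Matrix.cons_val_four] at e0 e1 e2 e3 e4
  have hl1 : l = 1 := scale_eq_one ((p.1 : EuclideanSpace ℝ (Fin 3)) 0)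
    ((p.1 : EuclideanSpace ℝ (Fin 3)) 1) ((p.1 : EuclideanSpace ℝ (Fin 3)) 2)
    ((p.2 : EuclideanSpace ℝ (Fin 3)) 0) ((p.2 : EuclideanSpace ℝ (Fin 3)) 1)
    ((p.2 : EuclideanSpace ℝ (Fin 3)) 2) ((q.1 : EuclideanSpace ℝ (Fin 3)) 0)
    ((q.1 : EuclideanSpace ℝ (Fin 3)) 1) ((q.1 : EuclideanSpace ℝ (Fin 3)) 2)
    ((q.2 : EuclideanSpace ℝ (Fin 3)) 0) ((q.2 : EuclideanSpace ℝ (Fin 3)) 1)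
    ((q.2 : EuclideanSpace ℝ (Fin 3)) 2) l hl
    (sphere3_sum p.1) (sphere3_sum p.2) (sphere3_sum q.1) (sphere3_sum q.2) e0 e1 e2 e3 e4
  rw [hl1, one_mul] at e0 e1 e2 e3 e4
  have f0 : ((q.1 : EuclideanSpace ℝ (Fin 3)) 0)^2 = ((p.1 : EuclideanSpace ℝ (Fin 3)) 0)^2 := by
    rw [e0]
  have f1 : ((q.1 : EuclideanSpace ℝ (Fin 3)) 2)^2 = ((p.1 : EuclideanSpace ℝ (Fin 3)) 2)^2 := by
    rw [e1]
  have g0 : ((q.2 : EuclideanSpace ℝ (Fin 3)) 0)^2 = ((p.2 : EuclideanSpace ℝ (Fin 3)) 0)^2 := by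
    rw [e2]
  have g1 : ((q.2 : EuclideanSpace ℝ (Fin 3)) 2)^2 = ((p.2 : EuclideanSpace ℝ (Fin 3)) 2)^2 := by
    rw [e3]
  have hsq1 : ((q.1 : EuclideanSpace ℝ (Fin 3)) 1)^2 = ((p.1 : EuclideanSpace ℝ (Fin 3)) 1)^2 := by
    linarith [sphere3_sum p.1, sphere3_sum q.1, f0, f1]
  have hsq2 : ((q.2 : EuclideanSpace ℝ (Fin 3)) 1)^2 = ((p.2 : EuclideanSpace ℝ (Fin 3)) 1)^2 := by
    linarith [sphere3_sum p.2, sphere3_sum q.2, g0, g1]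
  rcases sign_cases ((p.1 : EuclideanSpace ℝ (Fin 3)) 1) ((p.2 : EuclideanSpace ℝ (Fin 3)) 1)
      ((q.1 : EuclideanSpace ℝ (Fin 3)) 1) ((q.2 : EuclideanSpace ℝ (Fin 3)) 1)
      hsq1 hsq2 e4 with ⟨h1, h2⟩ | ⟨h1, h2⟩
  · exact Or.inl (Prod.ext (sphere_ext e0 h1 e1) (sphere_ext e2 h2 e3))
  · refine Or.inr (Prod.ext ?_ ?_) <;> refine sphere_ext ?_ ?_ ?_ <;>
      simp only [tau, reflSphere_coe, Matrix.cons_val_zero, Matrix.cons_val_one,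
        Matrix.head_cons, Matrix.cons_val_two, Matrix.tail_cons] <;>
      assumption

lemma Hs_surjective (v : Metric.sphere (0 : EuclideanSpace ℝ (Fin 5)) 1) :
    ∃ p, Hs p = v := by
  set v0 := (v : EuclideanSpace ℝ (Fin 5)) 0 with hv0
  set v1 := (v : EuclideanSpace ℝ (Fin 5)) 1 with hv1
  set v2 := (v : EuclideanSpace ℝ (Fin 5)) 2 with hv2
  set v3 := (v : EuclideanSpace ℝ (Fin 5)) 3 with hv3
  set v4 := (v : EuclideanSpace ℝ (Fin 5)) 4 with hv4
  have hsum : v0^2 + v1^2 + v2^2 + v3^2 + v4^2 = 1 := sphere5_sum v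
  obtain ⟨m, hm, heq, hms, hmt⟩ := lemA (v0^2 + v1^2) (v2^2 + v3^2) (by positivity)
    (by positivity) (by nlinarith [sq_nonneg v4])
  set μ := Real.sqrt m with hμ
  have hμ2 : μ^2 = m := Real.sq_sqrt hm.le
  have hμpos : 0 < μ := Real.sqrt_pos.mpr hm
  set ε : ℝ := if 0 ≤ v4 then 1 else -1 with hε
  have hε2 : ε^2 = 1 := by rw [hε]; split <;> norm_num
  have hεabs : ε * |v4| = v4 := by
    rw [hε]; split
    · rw [abs_of_nonneg (by assumption)]; ring
    · rw [abs_of_neg (by linarith)]; ring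
  set x1 : ℝ := ε * Real.sqrt (1 - m*(v0^2 + v1^2)) with hx1
  set z1 : ℝ := Real.sqrt (1 - m*(v2^2 + v3^2)) with hz1
  have hx1sq : x1^2 = 1 - m*(v0^2 + v1^2) := by
    rw [hx1, mul_pow, hε2, one_mul, Real.sq_sqrt (by linarith)]
  have hz1sq : z1^2 = 1 - m*(v2^2 + v3^2) := by
    rw [hz1, Real.sq_sqrt (by linarith)]
  have hprod2 : (1-m*(v0^2 + v1^2))*(1-m*(v2^2 + v3^2)) = m*v4^2 := by
    linear_combination heq - m*hsum
  have hkey : x1 * z1 = μ * v4 := by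
    rw [hx1, hz1, mul_assoc, ← Real.sqrt_mul (by linarith), hprod2,
      Real.sqrt_mul hm.le, Real.sqrt_sq_eq_abs, ← hμ]
    rw [← mul_assoc, mul_comm ε μ, mul_assoc, hεabs]
  have hxmem : (μ*v0)^2 + x1^2 + (μ*v1)^2 = 1 := by
    linear_combination v0^2*hμ2 + v1^2*hμ2 + hx1sq
  have hzmem : (μ*v2)^2 + z1^2 + (μ*v3)^2 = 1 := by
    linear_combination v2^2*hμ2 + v3^2*hμ2 + hz1sq
  refine ⟨(⟨WithLp.toLp 2 ![μ*v0, x1, μ*v1], mem_sphere3 _ _ _ hxmem⟩,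
           ⟨WithLp.toLp 2 ![μ*v2, z1, μ*v3], mem_sphere3 _ _ _ hzmem⟩), ?_⟩
  have hFv : Fmap (⟨WithLp.toLp 2 ![μ*v0, x1, μ*v1], mem_sphere3 _ _ _ hxmem⟩,
      ⟨WithLp.toLp 2 ![μ*v2, z1, μ*v3], mem_sphere3 _ _ _ hzmem⟩) = μ • (v : EuclideanSpace ℝ (Fin 5)) := by
    ext i
    fin_cases i
    · exact rfl
    · exact rfl
    · exact rfl
    · exact rfl
    · exact hkey
  have hnv : ‖(v : EuclideanSpace ℝ (Fin 5))‖ = 1 := mem_sphere_zero_iff_norm.mp v.2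
  apply Subtype.ext
  show ‖Fmap _‖⁻¹ • Fmap _ = (v : EuclideanSpace ℝ (Fin 5))
  rw [hFv, norm_smul, hnv, Real.norm_eq_abs, abs_of_pos hμpos, mul_one, smul_smul,
    inv_mul_cancel₀ hμpos.ne', one_smul]

/-- The orbit space of `S² × S²` by the simultaneous reflection `τ(x, y) = (r(x), r(y))`,
where `r(x₁, x₂, x₃) = (x₁, −x₂, x₃)`, equipped with the quotient topology, is
homeomorphic to the 4-sphere `S⁴`. -/
theorem s2_x_s2_quotient_reflection_homeomorph_s4 :
    Nonempty ((Quot fun p q : TwoSphere × TwoSphere => q = tau p) ≃ₜ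
      Metric.sphere (0 : EuclideanSpace ℝ (Fin 5)) 1) := by
  have hinv : ∀ a b : TwoSphere × TwoSphere, b = tau a → Hs a = Hs b := by
    intro a b hab
    rw [hab, Hs_tau]
  let Hbar : (Quot fun p q : TwoSphere × TwoSphere => q = tau p) →
      Metric.sphere (0 : EuclideanSpace ℝ (Fin 5)) 1 := Quot.lift Hs hinv
  have hcont : Continuous Hbar := continuous_quot_lift hinv continuous_Hs
  have hinj : Function.Injective Hbar := by
    intro a b
    induction a using Quot.ind with | _ p =>
    induction b using Quot.ind with | _ q =>
    intro hpq
    have hpq' : Hs p = Hs q := hpq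
    rcases Hs_injective hpq' with h | h
    · rw [h]
    · exact Quot.sound (r := fun p q : TwoSphere × TwoSphere => q = tau p) h
  have hsurj : Function.Surjective Hbar := by
    intro v
    obtain ⟨p, hp⟩ := Hs_surjective v
    exact ⟨Quot.mk _ p, hp⟩
  exact ⟨Continuous.homeoOfEquivCompactToT2
    (f := Equiv.ofBijective Hbar ⟨hinj, hsurj⟩) hcont⟩


end
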